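/- The Apéry numbers a(n) = Σ_{k=0}^{n} C(n,k)^2 C(n+k,n) satisfy the recurrence (n+1)^2 a(n+1) = (11n^2+11n+3) a(n) + n^2 a(n-1) for all n ≥ 1, with a(0)=1, a(1)=3. -/

import Mathlib

open Finset Nat

private def apF (n k : ℕ) : ℚ := (n.choose k : ℚ)^2 * ((n + k).choose n : ℚ)

private def apP (n k : ℚ) : ℚ :=
  -30 + 7*k + k^2 - 67*n + 13*n*k + n*k^2 - 48*n^2 + 6*n^2*k - 11*n^3

private def apG (n k : ℕ) : ℚ :=
  (k : ℚ)^3 * apP (n : ℚ) (k : ℚ) * ((n+2).choose k : ℚ)^2 * ((n + k).choose n : ℚ)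

set_option maxHeartbeats 1000000 in
private lemma apery_key (n k : ℕ) :
    ((n:ℚ)+1)^2 * ((n:ℚ)+2)^2 *
      ( ((n:ℚ)+2)^2 * apF (n+2) k - (11*(n:ℚ)^2 + 33*(n:ℚ) + 25) * apF (n+1) k
        - ((n:ℚ)+1)^2 * apF n k ) = apG n (k+1) - apG n k := by
  rcases le_or_gt k n with h | h
  · -- main case k ≤ n
    have hb : ((k ! : ℚ)) ≠ 0 := by positivity
    have ha : (((n-k) ! : ℚ)) ≠ 0 := by positivity
    have hc : ((n ! : ℚ)) ≠ 0 := by positivity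
    have hd : (((n+k) ! : ℚ)) ≠ 0 := by positivity
    have hkn : ((k:ℚ)) ≤ (n:ℚ) := by exact_mod_cast h
    have hnk : ((n - k : ℕ) : ℚ) = (n:ℚ) - (k:ℚ) := by
      push_cast [h]; ring
    have h1 : ((n:ℚ) - k + 1) ≠ 0 := by linarith
    have h2 : ((n:ℚ) - k + 2) ≠ 0 := by linarith
    have h3 : ((k:ℚ) + 1) ≠ 0 := by positivity
    have h4 : ((n:ℚ) + 1) ≠ 0 := by positivity
    have h5 : ((n:ℚ) + 2) ≠ 0 := by positivity
    have e0 : (n.choose k : ℚ) = (n ! : ℚ) / ((k ! : ℚ) * ((n-k) ! : ℚ)) :=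
      Nat.cast_choose ℚ h
    have e1 : ((n+1).choose k : ℚ) =
        ((n:ℚ)+1) * (n ! : ℚ) / ((k ! : ℚ) * (((n:ℚ)-k+1) * ((n-k) ! : ℚ))) := by
      rw [Nat.cast_choose ℚ (by omega : k ≤ n+1)]
      have : n + 1 - k = (n - k) + 1 := by omega
      rw [this, Nat.factorial_succ, Nat.factorial_succ]
      push_cast [hnk]
      ring
    have e2 : ((n+2).choose k : ℚ) =
        ((n:ℚ)+2) * (((n:ℚ)+1)) * (n ! : ℚ) /
          ((k ! : ℚ) * ((((n:ℚ)-k+2) * (((n:ℚ)-k+1))) * ((n-k) ! : ℚ))) := by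
      rw [Nat.cast_choose ℚ (by omega : k ≤ n+2)]
      have : n + 2 - k = (n - k) + 1 + 1 := by omega
      rw [this, Nat.factorial_succ, Nat.factorial_succ, Nat.factorial_succ,
        Nat.factorial_succ]
      push_cast [hnk]
      ring
    have e3 : ((n+2).choose (k+1) : ℚ) =
        ((n:ℚ)+2) * ((n:ℚ)+1) * (n ! : ℚ) /
          ((((k:ℚ)+1) * (k ! : ℚ)) * (((n:ℚ)-k+1) * ((n-k) ! : ℚ))) := by
      rw [Nat.cast_choose ℚ (by omega : k+1 ≤ n+2)]
      have : n + 2 - (k+1) = (n - k) + 1 := by omega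
      rw [this, Nat.factorial_succ, Nat.factorial_succ, Nat.factorial_succ,
        Nat.factorial_succ]
      push_cast [hnk]
      ring
    have e4 : ((n + k).choose n : ℚ) = ((n+k) ! : ℚ) / ((n ! : ℚ) * (k ! : ℚ)) := by
      rw [Nat.cast_choose ℚ (by omega : n ≤ n+k)]
      have : n + k - n = k := by omega
      rw [this]
    have e5 : ((n + 1 + k).choose (n+1) : ℚ) =
        ((n:ℚ)+k+1) * ((n+k) ! : ℚ) / ((((n:ℚ)+1) * (n ! : ℚ)) * (k ! : ℚ)) := by
      rw [Nat.cast_choose ℚ (by omega : n+1 ≤ n+1+k)]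
      have h' : n + 1 + k - (n+1) = k := by omega
      have h'' : n + 1 + k = (n + k) + 1 := by omega
      rw [h', h'', Nat.factorial_succ, Nat.factorial_succ]
      push_cast
      ring
    have e6 : ((n + 2 + k).choose (n+2) : ℚ) =
        ((n:ℚ)+k+2) * ((n:ℚ)+k+1) * ((n+k) ! : ℚ) /
          (((((n:ℚ)+2) * ((n:ℚ)+1)) * (n ! : ℚ)) * (k ! : ℚ)) := by
      rw [Nat.cast_choose ℚ (by omega : n+2 ≤ n+2+k)]
      have h' : n + 2 + k - (n+2) = k := by omega
      have h'' : n + 2 + k = (n + k) + 1 + 1 := by omega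
      rw [h', h'', Nat.factorial_succ, Nat.factorial_succ, Nat.factorial_succ,
        Nat.factorial_succ]
      push_cast
      ring
    have e7 : ((n + (k+1)).choose n : ℚ) =
        ((n:ℚ)+k+1) * ((n+k) ! : ℚ) / ((n ! : ℚ) * (((k:ℚ)+1) * (k ! : ℚ))) := by
      rw [Nat.cast_choose ℚ (by omega : n ≤ n+(k+1))]
      have h' : n + (k+1) - n = k + 1 := by omega
      have h'' : n + (k+1) = (n + k) + 1 := by omega
      rw [h', h'', Nat.factorial_succ, Nat.factorial_succ]
      push_cast
      ring
    simp only [apF, apG, apP, e0, e1, e2, e3, e4, e5, e6, e7]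
    push_cast
    field_simp
    ring
  · rcases (by omega : k = n+1 ∨ k = n+2 ∨ n+3 ≤ k) with rfl | rfl | hk
    · -- k = n+1
      have hc : ((n ! : ℚ)) ≠ 0 := by positivity
      have hd : (((2*n+1) ! : ℚ)) ≠ 0 := by positivity
      have h4 : ((n:ℚ) + 1) ≠ 0 := by positivity
      have h5 : ((n:ℚ) + 2) ≠ 0 := by positivity
      have c0 : n.choose (n+1) = 0 := Nat.choose_eq_zero_of_lt (by omega)
      have c1 : (n+1).choose (n+1) = 1 := Nat.choose_self _
      have c2 : (n+2).choose (n+1) = n+2 := Nat.choose_succ_self_right _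
      have c3 : (n+2).choose (n+2) = 1 := Nat.choose_self _
      have E0 : ((n + (n+1)).choose n : ℚ) =
          ((2*n+1) ! : ℚ) / ((n ! : ℚ) * (((n:ℚ)+1) * (n ! : ℚ))) := by
        rw [show n + (n+1) = 2*n+1 by omega, Nat.cast_choose ℚ (by omega),
          show 2*n+1-n = n+1 by omega, Nat.factorial_succ n]
        push_cast; ring
      have E1 : ((n+1 + (n+1)).choose (n+1) : ℚ) =
          (2*(n:ℚ)+2) * ((2*n+1) ! : ℚ) /
            ((((n:ℚ)+1) * (n ! : ℚ)) * (((n:ℚ)+1) * (n ! : ℚ))) := by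
        rw [show n+1 + (n+1) = (2*n+1)+1 by omega, Nat.cast_choose ℚ (by omega),
          show (2*n+1)+1-(n+1) = n+1 by omega, Nat.factorial_succ (2*n+1), Nat.factorial_succ n]
        push_cast; ring
      have E2 : ((n+2 + (n+1)).choose (n+2) : ℚ) =
          (2*(n:ℚ)+3) * (2*(n:ℚ)+2) * ((2*n+1) ! : ℚ) /
            (((((n:ℚ)+2) * ((n:ℚ)+1)) * (n ! : ℚ)) * (((n:ℚ)+1) * (n ! : ℚ))) := by
        rw [show n+2 + (n+1) = (2*n+1)+1+1 by omega, Nat.cast_choose ℚ (by omega),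
          show (2*n+1)+1+1-(n+2) = n+1 by omega, Nat.factorial_succ ((2*n+1)+1),
          Nat.factorial_succ (2*n+1), Nat.factorial_succ (n+1), Nat.factorial_succ n]
        push_cast; ring
      have E3 : ((n + (n+1+1)).choose n : ℚ) =
          (2*(n:ℚ)+2) * ((2*n+1) ! : ℚ) /
            ((n ! : ℚ) * ((((n:ℚ)+2) * ((n:ℚ)+1)) * (n ! : ℚ))) := by
        rw [show n + (n+1+1) = (2*n+1)+1 by omega, Nat.cast_choose ℚ (by omega),
          show (2*n+1)+1-n = n+1+1 by omega, Nat.factorial_succ (2*n+1),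
          Nat.factorial_succ (n+1), Nat.factorial_succ n]
        push_cast; ring
      simp only [apF, apG, apP, c0, c1, c2, c3, E0, E1, E2, E3]
      push_cast
      field_simp
      ring
    · -- k = n+2
      have hc : ((n ! : ℚ)) ≠ 0 := by positivity
      have hd : (((2*n+1) ! : ℚ)) ≠ 0 := by positivity
      have h4 : ((n:ℚ) + 1) ≠ 0 := by positivity
      have h5 : ((n:ℚ) + 2) ≠ 0 := by positivity
      have c0 : n.choose (n+2) = 0 := Nat.choose_eq_zero_of_lt (by omega)
      have c1 : (n+1).choose (n+2) = 0 := Nat.choose_eq_zero_of_lt (by omega)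
      have c3 : (n+2).choose (n+2) = 1 := Nat.choose_self _
      have c4 : (n+2).choose (n+2+1) = 0 := Nat.choose_eq_zero_of_lt (by omega)
      have E3 : ((n + (n+2)).choose n : ℚ) =
          (2*(n:ℚ)+2) * ((2*n+1) ! : ℚ) /
            ((n ! : ℚ) * ((((n:ℚ)+2) * ((n:ℚ)+1)) * (n ! : ℚ))) := by
        rw [show n + (n+2) = (2*n+1)+1 by omega, Nat.cast_choose ℚ (by omega),
          show (2*n+1)+1-n = n+1+1 by omega, Nat.factorial_succ (2*n+1),
          Nat.factorial_succ (n+1), Nat.factorial_succ n]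
        push_cast; ring
      have E4 : ((n+2 + (n+2)).choose (n+2) : ℚ) =
          (2*(n:ℚ)+4) * (2*(n:ℚ)+3) * (2*(n:ℚ)+2) * ((2*n+1) ! : ℚ) /
            (((((n:ℚ)+2) * ((n:ℚ)+1)) * (n ! : ℚ)) *
              ((((n:ℚ)+2) * ((n:ℚ)+1)) * (n ! : ℚ))) := by
        rw [show n+2 + (n+2) = (2*n+1)+1+1+1 by omega, Nat.cast_choose ℚ (by omega),
          show (2*n+1)+1+1+1-(n+2) = n+1+1 by omega, Nat.factorial_succ ((2*n+1)+1+1),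
          Nat.factorial_succ ((2*n+1)+1), Nat.factorial_succ (2*n+1),
          Nat.factorial_succ (n+1), Nat.factorial_succ n]
        push_cast; ring
      simp only [apF, apG, apP, c0, c1, c3, c4, E3, E4]
      push_cast
      field_simp
      ring
    · -- k ≥ n+3
      have c0 : n.choose k = 0 := Nat.choose_eq_zero_of_lt (by omega)
      have c1 : (n+1).choose k = 0 := Nat.choose_eq_zero_of_lt (by omega)
      have c2 : (n+2).choose k = 0 := Nat.choose_eq_zero_of_lt (by omega)
      have c3 : (n+2).choose (k+1) = 0 := Nat.choose_eq_zero_of_lt (by omega)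
      simp only [apF, apG, c0, c1, c2, c3, Nat.cast_zero]
      ring

private lemma apG_zero_left (n : ℕ) : apG n 0 = 0 := by simp [apG]

private lemma apG_zero_right (n : ℕ) : apG n (n+3) = 0 := by
  have h : (n+2).choose (n+3) = 0 := Nat.choose_eq_zero_of_lt (by omega)
  simp [apG, h]

private lemma apery_sum (n : ℕ) :
    ((n:ℚ)+2)^2 * (∑ k ∈ range (n+2+1), apF (n+2) k)
      = (11*(n:ℚ)^2 + 33*(n:ℚ) + 25) * (∑ k ∈ range (n+1+1), apF (n+1) k)
        + ((n:ℚ)+1)^2 * (∑ k ∈ range (n+1), apF n k) := by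
  have hext1 : (∑ k ∈ range (n+1+1), apF (n+1) k) = ∑ k ∈ range (n+3), apF (n+1) k := by
    have h : (n+1).choose (n+2) = 0 := Nat.choose_eq_zero_of_lt (by omega)
    have hz : apF (n+1) (n+2) = 0 := by simp only [apF, h]; push_cast; ring
    conv_rhs => rw [show n+3 = (n+2)+1 by rfl, Finset.sum_range_succ]
    rw [hz, add_zero]
  have hext0 : (∑ k ∈ range (n+1), apF n k) = ∑ k ∈ range (n+3), apF n k := by
    have h1 : n.choose (n+1) = 0 := Nat.choose_eq_zero_of_lt (by omega)
    have h2 : n.choose (n+1+1) = 0 := Nat.choose_eq_zero_of_lt (by omega)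
    have hz1 : apF n (n+1) = 0 := by simp only [apF, h1]; push_cast; ring
    have hz2 : apF n (n+1+1) = 0 := by simp only [apF, h2]; push_cast; ring
    conv_rhs => rw [show n+3 = (n+1)+1+1 by rfl, Finset.sum_range_succ, Finset.sum_range_succ]
    rw [hz1, hz2, add_zero, add_zero]
  have h0 : ∑ k ∈ Finset.range (n+3), (((n:ℚ)+1)^2 * ((n:ℚ)+2)^2 *
      ( ((n:ℚ)+2)^2 * apF (n+2) k - (11*(n:ℚ)^2 + 33*(n:ℚ) + 25) * apF (n+1) k
        - ((n:ℚ)+1)^2 * apF n k)) = 0 := by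
    rw [Finset.sum_congr rfl (fun k _ => apery_key n k), Finset.sum_range_sub (f := apG n),
      apG_zero_right, apG_zero_left, sub_zero]
  simp only [mul_sub, Finset.sum_sub_distrib, ← Finset.mul_sum] at h0
  rw [hext1, hext0]
  have hne : (((n:ℚ)+1)^2 * ((n:ℚ)+2)^2) ≠ 0 := by positivity
  apply mul_left_cancel₀ hne
  rw [show n+2+1 = n+3 by rfl] at *
  linear_combination h0

/-- The Apéry numbers `a n = ∑ k, (n.choose k)^2 * ((n+k).choose n)` satisfy the recurrence
`(n+1)² a(n+1) = (11n²+11n+3) a(n) + n² a(n-1)` for all `n ≥ 1`,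
with `a 0 = 1` and `a 1 = 3`. -/
theorem apery_recurrence (a : ℕ → ℕ)
    (ha : ∀ n, a n = ∑ k ∈ Finset.range (n + 1),
      (Nat.choose n k) ^ 2 * Nat.choose (n + k) n) :
    a 0 = 1 ∧ a 1 = 3 ∧
      ∀ n, 1 ≤ n →
        (n + 1) ^ 2 * a (n + 1) = (11 * n ^ 2 + 11 * n + 3) * a n + n ^ 2 * a (n - 1) := by
  have hA : ∀ j, (a j : ℚ) = ∑ k ∈ Finset.range (j+1), apF j k := by
    intro j
    rw [ha j, Nat.cast_sum]
    exact Finset.sum_congr rfl (fun k _ => by simp only [apF]; push_cast; ring)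
  refine ⟨by rw [ha]; decide, by rw [ha]; decide, ?_⟩
  intro n hn
  obtain ⟨m, rfl⟩ : ∃ m, n = m + 1 := ⟨n - 1, by omega⟩
  simp only [Nat.add_sub_cancel]
  have key := apery_sum m
  rw [← hA, ← hA, ← hA] at key
  have goalQ : (((m+1+1)^2 * a (m+1+1) : ℕ) : ℚ)
      = (((11*(m+1)^2 + 11*(m+1) + 3) * a (m+1) + (m+1)^2 * a m : ℕ) : ℚ) := by
    push_cast
    linear_combination key
  exact_mod_cast goalQ
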